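/- Let G be a k-regular simple graph on n vertices with independence number α. Then the smallest adjacency eigenvalue λ of G satisfies λ ≤ -αk/(n-α). -/

import Mathlib

/-- The smallest eigenvalue of a real symmetric matrix. -/
noncomputable def minEig {n : Type*} [Fintype n] [DecidableEq n] (hn : Nonempty n)
    {A : Matrix n n ℝ} (hA : A.IsHermitian) : ℝ :=
  Finset.univ.inf' (Finset.univ_nonempty_iff.mpr hn) hA.eigenvalues

/-- The adjacency matrix of a graph is Hermitian. -/
lemma adjHerm {V : Type*} [Fintype V] (G : SimpleGraph V) [DecidableRel G.Adj] :
    (G.adjMatrix ℝ).IsHermitian := by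
  ext i j
  simp [Matrix.conjTranspose_apply, SimpleGraph.adj_comm]

open scoped Matrix in
/-- Rayleigh quotient bound for the smallest eigenvalue. -/
lemma rayleigh {n : Type*} [Fintype n] [DecidableEq n] (hn : Nonempty n)
    {A : Matrix n n ℝ} (hA : A.IsHermitian) (x : n → ℝ) :
    minEig hn hA * (x ⬝ᵥ x) ≤ x ⬝ᵥ (A *ᵥ x) := by
  classical
  set U : Matrix n n ℝ := (hA.eigenvectorUnitary : Matrix n n ℝ) with hUdef
  have hU : U ∈ Matrix.unitaryGroup n ℝ := hA.eigenvectorUnitary.2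
  set y : n → ℝ := star U *ᵥ x with hy
  have hUU : U * star U = 1 := (Matrix.mem_unitaryGroup_iff).mp hU
  have hUU' : star U * U = 1 := mul_eq_one_comm.mp hUU
  have hsU : star U = Uᵀ := rfl
  have hUy : U *ᵥ y = x := by rw [hy, Matrix.mulVec_mulVec, hUU, Matrix.one_mulVec]
  have hxy : x ⬝ᵥ x = y ⬝ᵥ y := by
    conv_lhs => rw [← hUy]
    rw [Matrix.dotProduct_mulVec, ← Matrix.mulVec_transpose, Matrix.mulVec_mulVec, ← hsU,
      hUU', Matrix.one_mulVec]
  have hAx : x ⬝ᵥ (A *ᵥ x) = ∑ i, hA.eigenvalues i * (y i * y i) := by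
    have h2 : A *ᵥ x = U *ᵥ (Matrix.diagonal hA.eigenvalues *ᵥ y) := by
      rw [hy, Matrix.mulVec_mulVec, Matrix.mulVec_mulVec]
      conv_lhs => rw [hA.spectral_theorem]
      congr 1
    rw [h2, Matrix.dotProduct_mulVec, ← Matrix.mulVec_transpose, ← hsU, ← hy]
    simp only [dotProduct, Matrix.mulVec_diagonal]
    exact Finset.sum_congr rfl fun i _ => by ring
  rw [hxy, hAx]
  have h3 : minEig hn hA * (y ⬝ᵥ y) = ∑ i, minEig hn hA * (y i * y i) := by
    simp [dotProduct, Finset.mul_sum]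
  rw [h3]
  exact Finset.sum_le_sum fun i _ =>
    mul_le_mul_of_nonneg_right (Finset.inf'_le _ (Finset.mem_univ i)) (mul_self_nonneg _)

open scoped Matrix in
/-- Hoffman's ratio bound: if `G` is a `k`-regular simple graph on `n` vertices with
independence number `α` (the size of a largest set of pairwise nonadjacent vertices),
then the smallest adjacency eigenvalue `λ` of `G` satisfies `λ ≤ -αk/(n - α)`. -/
theorem stmt15 {V : Type*} [Fintype V] [DecidableEq V] (hV : Nonempty V)
    (G : SimpleGraph V) [DecidableRel G.Adj] (k : ℕ) (hreg : G.IsRegularOfDegree k)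
    (α : ℕ)
    (hα : IsGreatest {a : ℕ | ∃ s : Finset V,
      (∀ u ∈ s, ∀ v ∈ s, u ≠ v → ¬ G.Adj u v) ∧ s.card = a} α) :
    minEig hV (adjHerm G) ≤ -((α : ℝ) * k) / ((Fintype.card V : ℝ) - α) := by
  classical
  obtain ⟨⟨s, hind, hcard⟩, hub⟩ := hα
  set A : Matrix V V ℝ := G.adjMatrix ℝ with hA
  set n : ℕ := Fintype.card V with hn
  -- constants
  set N : ℝ := (n : ℝ)
  set a : ℝ := (α : ℝ)
  set K : ℝ := (k : ℝ)
  -- basic vectors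
  set o : V → ℝ := Function.const V (1:ℝ) with ho
  set χ : V → ℝ := fun v => if v ∈ s then (1:ℝ) else 0 with hχ
  have hAo : A *ᵥ o = fun _ => (k : ℝ) * 1 := by
    funext v
    exact SimpleGraph.adjMatrix_mulVec_const_apply_of_regular hreg
  have hoo : o ⬝ᵥ o = N := by simp [dotProduct, ho, hn, N]
  have hχsum : ∀ f : V → ℝ, χ ⬝ᵥ f = ∑ v ∈ s, f v := by
    intro f
    simp [dotProduct, hχ, ite_mul, Finset.sum_ite_mem, Finset.univ_inter]
  have hχχ : χ ⬝ᵥ χ = a := by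
    rw [hχsum]
    have : ∀ v ∈ s, χ v = 1 := fun v hv => by simp [hχ, hv]
    rw [Finset.sum_congr rfl this]
    simp [hcard, a]
  have hχo : χ ⬝ᵥ o = a := by
    rw [hχsum]; simp [ho, hcard, a]
  have hoχ : o ⬝ᵥ χ = a := by
    rw [dotProduct_comm]; exact hχo
  -- independence: neighbors of s-vertices avoid s
  have hNs : ∀ v ∈ s, ∑ u ∈ G.neighborFinset v, χ u = 0 := by
    intro v hv
    apply Finset.sum_eq_zero
    intro u hu
    rw [SimpleGraph.mem_neighborFinset] at hu
    have hus : u ∉ s := fun hus => hind v hv u hus (G.ne_of_adj hu) hu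
    simp [hχ, hus]
  have hχAχ : χ ⬝ᵥ (A *ᵥ χ) = 0 := by
    apply Finset.sum_eq_zero
    intro v _
    by_cases hv : v ∈ s
    · simp [hA, SimpleGraph.adjMatrix_mulVec_apply, hNs v hv]
    · simp [hχ, hv]
  have hχAo : χ ⬝ᵥ (A *ᵥ o) = a * K := by
    rw [hAo, hχsum]
    simp [hcard, a, K, mul_comm]
  have hoAχ : o ⬝ᵥ (A *ᵥ χ) = a * K := by
    have hAt : Aᵀ = A := by simp [hA]
    rw [Matrix.dotProduct_mulVec, ← Matrix.mulVec_transpose, hAt, hAo, dotProduct_comm,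
      hχsum]
    simp [hcard, a, K, mul_comm]
  have hoAo : o ⬝ᵥ (A *ᵥ o) = N * K := by
    rw [hAo]
    simp [dotProduct, ho, hn, N, K, mul_comm]
  -- bounds on α
  have hα1 : 1 ≤ α := by
    refine hub ⟨{hV.some}, ?_, Finset.card_singleton _⟩
    intro u hu v hv huv
    simp only [Finset.mem_singleton] at hu hv
    exact absurd (hu.trans hv.symm) huv
  have hαn : α ≤ n := hcard ▸ Finset.card_le_univ s
  have ha1 : (1:ℝ) ≤ a := by
    show (1:ℝ) ≤ (α:ℝ)
    exact_mod_cast hα1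
  have hNpos : (0:ℝ) < N := by
    show (0:ℝ) < (n:ℝ)
    exact_mod_cast (Fintype.card_pos : 0 < Fintype.card V)
  by_cases hlt : α < n
  · -- main case
    have hNa : 0 < N - a := by
      have : (α:ℝ) < (n:ℝ) := by exact_mod_cast hlt
      simpa [N, a] using sub_pos.mpr this
    set x : V → ℝ := N • χ - a • o with hx
    have hP : x ⬝ᵥ x = N * a * (N - a) := by
      simp only [hx, sub_dotProduct, dotProduct_sub, smul_dotProduct,
        dotProduct_smul, smul_eq_mul, hχχ, hχo, hoχ, hoo]
      ring
    have hQ : x ⬝ᵥ (A *ᵥ x) = -(K * N * (a * a)) := by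
      have hmv : A *ᵥ x = N • (A *ᵥ χ) - a • (A *ᵥ o) := by
        rw [hx, Matrix.mulVec_sub, Matrix.mulVec_smul, Matrix.mulVec_smul]
      rw [hmv]
      simp only [hx, hmv, sub_dotProduct, dotProduct_sub, smul_dotProduct,
        dotProduct_smul, smul_eq_mul, hχAχ, hχAo, hoAχ, hoAo]
      ring
    have hr := rayleigh hV (adjHerm G) x
    rw [hP, hQ] at hr
    rw [le_div_iff₀ hNa]
    nlinarith [hr, mul_pos hNpos (lt_of_lt_of_le one_pos ha1)]
  · -- degenerate case: α = n, so k = 0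
    have hαeq : α = n := le_antisymm hαn (not_lt.mp hlt)
    have hsu : s = Finset.univ := Finset.eq_univ_of_card s (hcard.trans hαeq)
    have hk0 : k = 0 := by
      have hdeg : G.degree hV.some = 0 := by
        rw [← SimpleGraph.card_neighborFinset_eq_degree, Finset.card_eq_zero]
        ext u
        simp only [SimpleGraph.mem_neighborFinset, Finset.notMem_empty, iff_false]
        intro hadj
        exact hind hV.some (hsu ▸ Finset.mem_univ _) u (hsu ▸ Finset.mem_univ _)
          (G.ne_of_adj hadj) hadj
      rw [← hreg hV.some, hdeg]
    have hNa0 : N - a = 0 := by simp [N, a, hαeq]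
    rw [hNa0, div_zero]
    have hr := rayleigh hV (adjHerm G) o
    rw [hoo, hoAo] at hr
    have hK0 : K = 0 := by simp [K, hk0]
    nlinarith [hr]
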